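/- Let n ≥ 1 and let P ∈ ℝ[X_1,…,X_n] be a multi-affine polynomial that is irreducible in ℝ[X_1,…,X_n]. Write P = X_n·Q + R with Q, R ∈ ℝ[X_1,…,X_{n−1}] (i.e., Q is the coefficient of X_n in P), and assume Q ≠ 0. Then no connected component of Z(P, ℝ^n) is contained in Z(Q, ℝ^n), where Q is regarded as a polynomial in ℝ[X_1,…,X_n] not involving X_n. -/

import Mathlib

open MvPolynomial

namespace NoComp

variable {n : ℕ}

noncomputable def subst (i : Fin n) (a : ℝ) (p : MvPolynomial (Fin n) ℝ) :
    MvPolynomial (Fin n) ℝ :=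
  aeval (Function.update X i (MvPolynomial.C a)) p

lemma eval_subst (i : Fin n) (a : ℝ) (p : MvPolynomial (Fin n) ℝ) (u : Fin n → ℝ) :
    eval u (subst i a p) = eval (Function.update u i a) p := by
  induction p using MvPolynomial.induction_on with
  | C c => simp [subst]
  | add p q hp hq => simp [subst, map_add] at *; rw [hp, hq]
  | mul_X p j hp =>
      simp only [subst, map_mul, map_mul] at *
      rw [hp]
      congr 1
      by_cases h : j = i
      · subst h; simp
      · simp [Function.update_apply, h]

lemma subst_monomial (i : Fin n) (a : ℝ) (m : Fin n →₀ ℕ) (c : ℝ) :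
    subst i a (monomial m c) = monomial (m.erase i) (c * a ^ (m i)) := by
  classical
  rw [subst, aeval_monomial]
  by_cases him : i ∈ m.support
  · rw [Finsupp.prod, ← Finset.mul_prod_erase _ _ him]
    have h1 : (Function.update X i (MvPolynomial.C a) i : MvPolynomial (Fin n) ℝ) = C a := by simp
    have h2 : ∀ j ∈ m.support.erase i,
        (Function.update X i (MvPolynomial.C a) j : MvPolynomial (Fin n) ℝ) ^ m j = X j ^ m j := by
      intro j hj
      rw [Function.update_apply, if_neg (Finset.ne_of_mem_erase hj)]
    rw [Finset.prod_congr rfl h2, h1, ← C_pow]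
    have h3 : (monomial (m.erase i)) (c * a ^ m i) =
        C (c * a ^ m i) * ∏ j ∈ (m.erase i).support, X j ^ (m.erase i) j := by
      rw [monomial_eq]; rfl
    rw [h3, Finsupp.support_erase]
    have h4 : ∀ j ∈ m.support.erase i, (X j : MvPolynomial (Fin n) ℝ) ^ (m.erase i) j = X j ^ m j := by
      intro j hj
      rw [Finsupp.erase_ne (Finset.ne_of_mem_erase hj)]
    rw [Finset.prod_congr rfl h4, map_mul, algebraMap_eq]
    ring
  · have hmi : m i = 0 := Finsupp.notMem_support_iff.mp him
    have herase : m.erase i = m := by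
      ext j
      rcases eq_or_ne j i with rfl | hj
      · simp [hmi]
      · simp [Finsupp.erase_ne hj]
    rw [herase, hmi, pow_zero, mul_one]
    have h2 : ∀ j ∈ m.support,
        (Function.update X i (MvPolynomial.C a) j : MvPolynomial (Fin n) ℝ) ^ m j = X j ^ m j := by
      intro j hj
      rw [Function.update_apply, if_neg (by rintro rfl; exact him hj)]
    rw [Finsupp.prod, Finset.prod_congr rfl h2, algebraMap_eq, monomial_eq]
    rfl


lemma degreeOf_monomial_le (j : Fin n) (m : Fin n →₀ ℕ) (c : ℝ) :
    degreeOf j (monomial m c : MvPolynomial (Fin n) ℝ) ≤ m j := by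
  classical
  by_cases hc : c = 0
  · simp [hc]
  · rw [degreeOf_monomial_eq m j hc]


lemma subst_as_sum (i : Fin n) (a : ℝ) (p : MvPolynomial (Fin n) ℝ) :
    (aeval (Function.update X i (MvPolynomial.C a)) p : MvPolynomial (Fin n) ℝ)
      = ∑ m ∈ p.support, monomial (m.erase i) (coeff m p * a ^ (m i)) := by
  conv_lhs => rw [as_sum p]
  rw [map_sum]
  exact Finset.sum_congr rfl fun m _ => subst_monomial i a m (coeff m p)

lemma pderiv_as_sum (i : Fin n) (p : MvPolynomial (Fin n) ℝ) :
    pderiv i p = ∑ m ∈ p.support, monomial (m - Finsupp.single i 1) (coeff m p * m i) := by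
  conv_lhs => rw [as_sum p]
  rw [map_sum]
  exact Finset.sum_congr rfl fun m _ => pderiv_monomial

lemma degreeOf_subst_le (i : Fin n) (a : ℝ) (p : MvPolynomial (Fin n) ℝ) (j : Fin n) :
    degreeOf j (subst i a p) ≤ degreeOf j p := by
  rw [subst, subst_as_sum]
  refine le_trans (degreeOf_sum_le _ _ _) (Finset.sup_le fun m hm => ?_)
  refine le_trans (degreeOf_monomial_le _ _ _) ?_
  refine le_trans ?_ (monomial_le_degreeOf j hm)
  rcases eq_or_ne j i with rfl | hj
  · simp
  · simp [Finsupp.erase_ne hj]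

lemma degreeOf_subst_self (i : Fin n) (a : ℝ) (p : MvPolynomial (Fin n) ℝ) :
    degreeOf i (subst i a p) = 0 := by
  rw [subst, subst_as_sum]
  refine Nat.le_zero.mp (le_trans (degreeOf_sum_le _ _ _) (Finset.sup_le fun m hm => ?_))
  refine le_trans (degreeOf_monomial_le _ _ _) ?_
  simp

lemma degreeOf_pderiv_le (i : Fin n) (p : MvPolynomial (Fin n) ℝ) (j : Fin n) :
    degreeOf j (pderiv i p) ≤ degreeOf j p := by
  rw [pderiv_as_sum]
  refine le_trans (degreeOf_sum_le _ _ _) (Finset.sup_le fun m hm => ?_)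
  refine le_trans (degreeOf_monomial_le _ _ _) ?_
  refine le_trans ?_ (monomial_le_degreeOf j hm)
  rw [Finsupp.tsub_apply]
  exact Nat.sub_le _ _

lemma degreeOf_pderiv_self (i : Fin n) (p : MvPolynomial (Fin n) ℝ)
    (hp : degreeOf i p ≤ 1) : degreeOf i (pderiv i p) = 0 := by
  rw [pderiv_as_sum]
  refine Nat.le_zero.mp (le_trans (degreeOf_sum_le _ _ _) (Finset.sup_le fun m hm => ?_))
  refine le_trans (degreeOf_monomial_le _ _ _) ?_
  rw [Finsupp.tsub_apply, Finsupp.single_eq_same]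
  exact Nat.le_zero.mpr (Nat.sub_eq_zero_of_le (le_trans (monomial_le_degreeOf i hm) hp))

lemma mono_decomp (i : Fin n) (a : ℝ) (m : Fin n →₀ ℕ) (c : ℝ) (hm : m i ≤ 1) :
    (monomial m c : MvPolynomial (Fin n) ℝ)
      = (X i - C a) * pderiv i (monomial m c) + subst i a (monomial m c) := by
  rw [pderiv_monomial, subst_monomial]
  interval_cases h : m i
  · have herase : m.erase i = m := by
      ext j
      rcases eq_or_ne j i with rfl | hj
      · simp [h]
      · simp [Finsupp.erase_ne hj]
    simp [herase]
  · have hle : Finsupp.single i 1 ≤ m := by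
      rw [Finsupp.single_le_iff, h]
    have herase : m.erase i = m - Finsupp.single i 1 := by
      ext j
      rcases eq_or_ne j i with rfl | hj
      · simp [h]
      · simp [Finsupp.erase_ne hj, Finsupp.tsub_apply, Finsupp.single_eq_of_ne' (Ne.symm hj)]
    have hX : (X i : MvPolynomial (Fin n) ℝ) * monomial (m - Finsupp.single i 1) c = monomial m c := by
      rw [X, monomial_mul, one_mul, add_tsub_cancel_of_le hle]
    rw [herase, sub_mul, pow_one]
    simp only [Nat.cast_one, mul_one]
    rw [hX, C_mul_monomial, mul_comm a c]
    ring

lemma decomp (i : Fin n) (a : ℝ) (p : MvPolynomial (Fin n) ℝ) (hp : degreeOf i p ≤ 1) :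
    p = (X i - C a) * pderiv i p + subst i a p := by
  conv_lhs => rw [as_sum p]
  rw [subst, subst_as_sum, pderiv_as_sum, Finset.mul_sum, ← Finset.sum_add_distrib]
  refine Finset.sum_congr rfl fun m hm => ?_
  have := mono_decomp i a m (coeff m p) (le_trans (monomial_le_degreeOf i hm) hp)
  rw [this, pderiv_monomial, subst_monomial]

lemma eval_update_of_degreeOf_eq_zero {i : Fin n} {p : MvPolynomial (Fin n) ℝ}
    (hp : degreeOf i p = 0) (y : Fin n → ℝ) (c : ℝ) :
    eval (Function.update y i c) p = eval y p := by
  rw [eval_eq, eval_eq]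
  refine Finset.sum_congr rfl fun m hm => ?_
  congr 1
  refine Finset.prod_congr rfl fun j hj => ?_
  have hji : j ≠ i := by
    rintro rfl
    have h1 : m j ≤ 0 := hp ▸ monomial_le_degreeOf j hm
    exact (Finsupp.mem_support_iff.mp hj) (Nat.le_zero.mp h1)
  rw [Function.update_apply, if_neg hji]

lemma eval_decomp (i : Fin n) (a : ℝ) (p : MvPolynomial (Fin n) ℝ) (hp : degreeOf i p ≤ 1)
    (u : Fin n → ℝ) :
    eval u p = (u i - a) * eval u (pderiv i p) + eval (Function.update u i a) p := by
  conv_lhs => rw [decomp i a p hp]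
  rw [map_add, map_mul, map_sub, eval_X, eval_C, eval_subst]

lemma subst_eq_self {i : Fin n} {a : ℝ} {p : MvPolynomial (Fin n) ℝ}
    (hp : degreeOf i p = 0) : subst i a p = p := by
  apply MvPolynomial.funext
  intro y
  rw [eval_subst, eval_update_of_degreeOf_eq_zero hp]

lemma continuous_evalp (p : MvPolynomial (Fin n) ℝ) :
    Continuous fun y : Fin n → ℝ => eval y p := by
  induction p using MvPolynomial.induction_on with
  | C c => simpa using continuous_const
  | add p q hp hq => simp only [map_add]; exact hp.add hq
  | mul_X p j hp => simp only [map_mul, eval_X]; exact hp.mul (continuous_apply j)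

lemma eval_line (p : MvPolynomial (Fin n) ℝ) (c z : Fin n → ℝ) (s : ℝ) :
    Polynomial.eval s
        (aeval (fun j => Polynomial.C (c j) + Polynomial.C (z j - c j) * Polynomial.X) p)
      = eval (fun j => c j + s * (z j - c j)) p := by
  induction p using MvPolynomial.induction_on with
  | C d => simp
  | add p q hp hq => rw [map_add, Polynomial.eval_add, hp, hq, map_add]
  | mul_X p j hp =>
      rw [map_mul, Polynomial.eval_mul, hp, map_mul, aeval_X, eval_X, Polynomial.eval_add,
        Polynomial.eval_mul, Polynomial.eval_C, Polynomial.eval_C, Polynomial.eval_X]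
      congr 1
      ring

lemma exists_eval_ne_of_ne_zero {p : MvPolynomial (Fin n) ℝ} (hp : p ≠ 0)
    (c : Fin n → ℝ) {ρ : ℝ} (hρ : 0 < ρ) :
    ∃ w ∈ Metric.ball c ρ, eval w p ≠ 0 := by
  by_contra h
  push_neg at h
  apply hp
  apply MvPolynomial.funext (q := 0)
  intro z
  rw [map_zero]
  set F : Polynomial ℝ :=
    aeval (fun j => Polynomial.C (c j) + Polynomial.C (z j - c j) * Polynomial.X) p with hF
  have hD : (0:ℝ) < dist z c + 1 := by positivity
  have hε : (0:ℝ) < ρ / (dist z c + 1) := by positivity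
  have hroots : ∀ s ∈ Set.Ioo (-(ρ / (dist z c + 1))) (ρ / (dist z c + 1)), F.IsRoot s := by
    intro s hs
    have hs' : |s| < ρ / (dist z c + 1) := abs_lt.mpr ⟨hs.1, hs.2⟩
    have hmem : (fun j => c j + s * (z j - c j)) ∈ Metric.ball c ρ := by
      rw [Metric.mem_ball]
      rw [dist_pi_lt_iff hρ]
      intro j
      have h1 : dist (c j + s * (z j - c j)) (c j) = |s| * |z j - c j| := by
        rw [Real.dist_eq, ← abs_mul]
        congr 1
        ring
      have h2 : |z j - c j| ≤ dist z c := by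
        rw [← Real.dist_eq]
        exact dist_le_pi_dist z c j
      calc dist (c j + s * (z j - c j)) (c j) = |s| * |z j - c j| := h1
        _ ≤ |s| * (dist z c + 1) := by
            apply mul_le_mul_of_nonneg_left _ (abs_nonneg s)
            linarith
        _ < (ρ / (dist z c + 1)) * (dist z c + 1) := by
            apply mul_lt_mul_of_pos_right hs' hD
        _ = ρ := div_mul_cancel₀ ρ (ne_of_gt hD)
    have := h _ hmem
    rw [Polynomial.IsRoot, hF, eval_line]
    exact this
  have hFzero : F = 0 := by
    apply Polynomial.eq_zero_of_infinite_isRoot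
    exact Set.Infinite.mono (fun x hx => hroots x hx) (Set.Ioo_infinite (by linarith))
  have h1 : Polynomial.eval 1 F = eval z p := by
    have hz : (fun j => c j + 1 * (z j - c j)) = z := by funext j; ring
    rw [hF, eval_line, hz]
  rw [hFzero] at h1
  simpa using h1.symm

lemma exists_eval_ne_of_ne_zero' {p : MvPolynomial (Fin n) ℝ} (hp : p ≠ 0) :
    ∃ w : Fin n → ℝ, eval w p ≠ 0 := by
  obtain ⟨w, _, hw⟩ := exists_eval_ne_of_ne_zero hp 0 one_pos
  exact ⟨w, hw⟩

lemma exists_degreeOf_ne_zero {q : MvPolynomial (Fin n) ℝ} (hq : q ≠ 0)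
    {y : Fin n → ℝ} (hy : eval y q = 0) : ∃ i, degreeOf i q ≠ 0 := by
  by_contra h
  push_neg at h
  have hsupp : q.support ⊆ {0} := by
    intro m hm
    rw [Finset.mem_singleton]
    ext j
    have := monomial_le_degreeOf j hm
    rw [h j] at this
    simpa using this
  have hqC : q = MvPolynomial.C (coeff 0 q) := by
    rcases Finset.subset_singleton_iff.mp hsupp with h0 | h0
    · exact absurd (MvPolynomial.support_eq_empty.mp h0) hq
    · conv_lhs => rw [as_sum q]
      rw [h0, Finset.sum_singleton, monomial_zero']
  rw [hqC, eval_C] at hy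
  exact hq (by rw [hqC, hy, map_zero])

lemma card_step {i : Fin n} {q r q' r' : MvPolynomial (Fin n) ℝ} {N : ℕ}
    (hi : degreeOf i q ≠ 0)
    (h0q : degreeOf i q' = 0) (h0r : degreeOf i r' = 0)
    (hsub : ∀ j, (degreeOf j q' ≠ 0 ∨ degreeOf j r' ≠ 0) →
      (degreeOf j q ≠ 0 ∨ degreeOf j r ≠ 0))
    (hcard : (Finset.filter (fun j => q.degreeOf j ≠ 0 ∨ r.degreeOf j ≠ 0) Finset.univ).card
      ≤ N + 1) :
    (Finset.filter (fun j => q'.degreeOf j ≠ 0 ∨ r'.degreeOf j ≠ 0) Finset.univ).card ≤ N := by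
  classical
  have hmem : i ∈ Finset.filter (fun j => q.degreeOf j ≠ 0 ∨ r.degreeOf j ≠ 0) Finset.univ :=
    Finset.mem_filter.mpr ⟨Finset.mem_univ i, Or.inl hi⟩
  have hss : Finset.filter (fun j => q'.degreeOf j ≠ 0 ∨ r'.degreeOf j ≠ 0) Finset.univ ⊆
      (Finset.filter (fun j => q.degreeOf j ≠ 0 ∨ r.degreeOf j ≠ 0) Finset.univ).erase i := by
    intro j hj
    rw [Finset.mem_filter] at hj
    refine Finset.mem_erase.mpr ⟨?_, Finset.mem_filter.mpr ⟨Finset.mem_univ j, hsub j hj.2⟩⟩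
    rintro rfl
    rcases hj.2 with h | h
    · exact h h0q
    · exact h h0r
  have := Finset.card_le_card hss
  rw [Finset.card_erase_of_mem hmem] at this
  omega

lemma seg_mem_ball {y w : Fin n → ℝ} {ρ : ℝ} (hρ : 0 < ρ) (hw : w ∈ Metric.ball y ρ)
    {s : ℝ} (hs : s ∈ Set.Icc (0:ℝ) 1) : (fun j => y j + s * (w j - y j)) ∈ Metric.ball y ρ := by
  rw [Metric.mem_ball, dist_pi_lt_iff hρ]
  intro j
  have h1 : dist (y j + s * (w j - y j)) (y j) = |s| * |w j - y j| := by
    rw [Real.dist_eq, ← abs_mul]; congr 1; ring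
  have h2 : |w j - y j| ≤ dist w y := by rw [← Real.dist_eq]; exact dist_le_pi_dist w y j
  have hs1 : |s| ≤ 1 := abs_le.mpr ⟨by linarith [hs.1], hs.2⟩
  calc dist (y j + s * (w j - y j)) (y j) = |s| * |w j - y j| := h1
    _ ≤ 1 * dist w y := mul_le_mul hs1 h2 (abs_nonneg _) zero_le_one
    _ < ρ := by rw [one_mul]; exact Metric.mem_ball.mp hw

lemma continuous_seg (y w : Fin n → ℝ) : Continuous (fun s : ℝ => fun j => y j + s * (w j - y j)) :=
  continuous_pi fun j => continuous_const.add (continuous_id.mul continuous_const)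

lemma continuous_upd {X : Type*} [TopologicalSpace X] {v : X → (Fin n → ℝ)} {g : X → ℝ}
    (i : Fin n) (hv : Continuous v) (hg : Continuous g) :
    Continuous fun x => Function.update (v x) i (g x) :=
  (continuous_update i).comp (hv.prodMk hg)

lemma extend {q r g : MvPolynomial (Fin n) ℝ} (hg : g ≠ 0) {y : Fin n → ℝ}
    {S : Set ((Fin n → ℝ) × ℝ)} (hpre : IsPreconnected S)
    (heq : ∀ p ∈ S, p.2 * eval p.1 q + eval p.1 r = 0)
    (hstart : ((y, (0:ℝ)) ∈ S)) (hend : ∃ p ∈ S, eval p.1 q ≠ 0) :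
    ∃ S' : Set ((Fin n → ℝ) × ℝ), IsPreconnected S' ∧
      (∀ p ∈ S', p.2 * eval p.1 q + eval p.1 r = 0) ∧
      ((y, (0:ℝ)) ∈ S') ∧ (∃ p ∈ S', eval p.1 q ≠ 0 ∧ eval p.1 g ≠ 0) := by
  obtain ⟨p₀, hp₀S, hp₀⟩ := hend
  have hop : IsOpen {v : Fin n → ℝ | eval v q ≠ 0} :=
    isOpen_compl_singleton.preimage (continuous_evalp q)
  obtain ⟨ρ, hρ, hball⟩ := Metric.isOpen_iff.mp hop p₀.1 hp₀
  have hqg : q * g ≠ 0 := mul_ne_zero (fun h => hp₀ (by rw [h, map_zero])) hg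
  obtain ⟨w, hwball, hw⟩ := exists_eval_ne_of_ne_zero hqg p₀.1 hρ
  rw [map_mul] at hw
  obtain ⟨hwq, hwg⟩ := mul_ne_zero_iff.mp hw
  set v : ℝ → (Fin n → ℝ) := fun s => fun j => p₀.1 j + s * (w j - p₀.1 j) with hv
  have hseg : ∀ s ∈ Set.Icc (0:ℝ) 1, eval (v s) q ≠ 0 := fun s hs =>
    hball (seg_mem_ball hρ hwball hs)
  set F : ℝ → (Fin n → ℝ) × ℝ := fun s => (v s, - eval (v s) r / eval (v s) q) with hFdef
  have hvc : Continuous v := continuous_seg _ _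
  have hFc : ContinuousOn F (Set.Icc (0:ℝ) 1) := by
    apply ContinuousOn.prodMk hvc.continuousOn
    exact ContinuousOn.div (((continuous_evalp r).comp hvc).neg.continuousOn)
      (((continuous_evalp q).comp hvc).continuousOn) hseg
  set S2 := F '' (Set.Icc (0:ℝ) 1) with hS2
  have hS2pre : IsPreconnected S2 := isPreconnected_Icc.image F hFc
  have hv0 : v 0 = p₀.1 := by funext j; simp [hv]
  have hv1 : v 1 = w := by funext j; simp [hv]
  have hF0 : F 0 = p₀ := by
    have h2 : - eval p₀.1 r / eval p₀.1 q = p₀.2 := by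
      rw [div_eq_iff hp₀]
      have := heq p₀ hp₀S
      linarith
    rw [hFdef]
    simp only [hv0, h2]
  have hp₀S2 : p₀ ∈ S2 := ⟨0, Set.mem_Icc.mpr ⟨le_refl 0, zero_le_one⟩, hF0⟩
  refine ⟨S ∪ S2, IsPreconnected.union p₀ hp₀S hp₀S2 hpre hS2pre, ?_, Or.inl hstart, ?_⟩
  · rintro p (hp | ⟨s, hs, rfl⟩)
    · exact heq p hp
    · have hq := hseg s hs
      simp only [hFdef]
      rw [div_mul_cancel₀ _ hq]
      ring
  · refine ⟨F 1, Or.inr ⟨1, Set.mem_Icc.mpr ⟨zero_le_one, le_refl 1⟩, rfl⟩, ?_, ?_⟩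
    · simpa [hFdef, hv1] using hwq
    · simpa [hFdef, hv1] using hwg

lemma key : ∀ (N : ℕ) (q r : MvPolynomial (Fin n) ℝ),
    (Finset.filter (fun j => q.degreeOf j ≠ 0 ∨ r.degreeOf j ≠ 0) Finset.univ).card ≤ N →
    (∀ j, q.degreeOf j ≤ 1) → (∀ j, r.degreeOf j ≤ 1) → q ≠ 0 →
    ∀ y : Fin n → ℝ, eval y q = 0 → eval y r = 0 →
    ∃ S : Set ((Fin n → ℝ) × ℝ), IsPreconnected S ∧
      (∀ p ∈ S, p.2 * eval p.1 q + eval p.1 r = 0) ∧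
      ((y, (0:ℝ)) ∈ S) ∧ (∃ p ∈ S, eval p.1 q ≠ 0) := by
  intro N
  induction N with
  | zero =>
      intro q r hcard hMAq hMAr hq0 y hyq hyr
      exfalso
      obtain ⟨i, hi⟩ := exists_degreeOf_ne_zero hq0 hyq
      have : i ∈ Finset.filter (fun j => q.degreeOf j ≠ 0 ∨ r.degreeOf j ≠ 0) Finset.univ :=
        Finset.mem_filter.mpr ⟨Finset.mem_univ i, Or.inl hi⟩
      have := Finset.card_pos.mpr ⟨i, this⟩
      omega
  | succ N IH =>
      intro q r hcard hMAq hMAr hq0 y hyq hyr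
      obtain ⟨i, hi⟩ := exists_degreeOf_ne_zero hq0 hyq
      set a := y i with ha
      set A := pderiv i q with hAdef
      set Cp := pderiv i r with hCdef
      set B := subst i a q with hBdef
      set D := subst i a r with hDdef
      have hAi : degreeOf i A = 0 := degreeOf_pderiv_self i q (hMAq i)
      have hCi : degreeOf i Cp = 0 := degreeOf_pderiv_self i r (hMAr i)
      have hBi : degreeOf i B = 0 := degreeOf_subst_self i a q
      have hDi : degreeOf i D = 0 := degreeOf_subst_self i a r
      have hMA_A : ∀ j, degreeOf j A ≤ 1 := fun j => le_trans (degreeOf_pderiv_le i q j) (hMAq j)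
      have hMA_C : ∀ j, degreeOf j Cp ≤ 1 := fun j => le_trans (degreeOf_pderiv_le i r j) (hMAr j)
      have hMA_B : ∀ j, degreeOf j B ≤ 1 := fun j => le_trans (degreeOf_subst_le i a q j) (hMAq j)
      have hMA_D : ∀ j, degreeOf j D ≤ 1 := fun j => le_trans (degreeOf_subst_le i a r j) (hMAr j)
      have hupd_ya : Function.update y i a = y := Function.update_eq_self i y
      have Hq : ∀ (v : Fin n → ℝ) (c : ℝ),
          eval (Function.update v i c) q = (c - a) * eval v A + eval v B := by
        intro v c
        rw [eval_decomp i a q (hMAq i) (Function.update v i c), Function.update_self,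
          Function.update_idem, hBdef, eval_subst,
          eval_update_of_degreeOf_eq_zero hAi]
      have Hr : ∀ (v : Fin n → ℝ) (c : ℝ),
          eval (Function.update v i c) r = (c - a) * eval v Cp + eval v D := by
        intro v c
        rw [eval_decomp i a r (hMAr i) (Function.update v i c), Function.update_self,
          Function.update_idem, hDdef, eval_subst,
          eval_update_of_degreeOf_eq_zero hCi]
      have hyB : eval y B = 0 := by
        have h := Hq y a
        rw [hupd_ya, sub_self, zero_mul, zero_add] at h
        rw [← h, hyq]
      have hyD : eval y D = 0 := by
        have h := Hr y a
        rw [hupd_ya, sub_self, zero_mul, zero_add] at h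
        rw [← h, hyr]
      -- the vertical line T0
      set T0 : Set ((Fin n → ℝ) × ℝ) := (fun τ : ℝ => (y, τ)) '' Set.univ with hT0def
      have hT0pre : IsPreconnected T0 :=
        isPreconnected_univ.image _ ((continuous_const.prodMk continuous_id).continuousOn)
      have hT0eq : ∀ p ∈ T0, p.2 * eval p.1 q + eval p.1 r = 0 := by
        rintro p ⟨τ, -, rfl⟩
        simp [hyq, hyr]
      have hyT0 : ∀ τ : ℝ, (y, τ) ∈ T0 := fun τ => ⟨τ, trivial, rfl⟩
      by_cases h1 : eval y A ≠ 0
      · -- Case 1 : move along coordinate i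
        set t0 := -(eval y Cp) / (eval y A) with ht0
        have key1 : t0 * eval y A + eval y Cp = 0 := by
          rw [ht0, div_mul_cancel₀ _ h1]; ring
        set f : ℝ → (Fin n → ℝ) × ℝ := fun s => (Function.update y i (a + s), t0) with hfdef
        have hfc : Continuous f :=
          (continuous_upd i continuous_const (continuous_const.add continuous_id)).prodMk
            continuous_const
        set S1 := f '' Set.univ with hS1
        have hS1pre : IsPreconnected S1 := isPreconnected_univ.image f hfc.continuousOn
        have hstart : (y, t0) ∈ S1 := ⟨0, trivial, by rw [hfdef]; simp [hupd_ya]⟩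
        refine ⟨T0 ∪ S1, IsPreconnected.union (y, t0) (hyT0 t0) hstart hT0pre hS1pre,
          ?_, Or.inl (hyT0 0), ?_⟩
        · rintro p (hp | ⟨s, -, rfl⟩)
          · exact hT0eq p hp
          · simp only [hfdef]
            rw [Hq y (a + s), Hr y (a + s), hyB, hyD]
            linear_combination (a + s - a) * key1
        · refine ⟨f 1, Or.inr ⟨1, trivial, rfl⟩, ?_⟩
          simp only [hfdef]
          rw [Hq y (a + 1), hyB]
          have : a + 1 - a = 1 := by ring
          rw [this, one_mul, add_zero]
          exact h1
      · push_neg at h1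
        by_cases h2 : B = 0
        · -- Case 3 : q = (X i - C a) * A
          have hq_poly : q = (X i - MvPolynomial.C a) * A + B := decomp i a q (hMAq i)
          have hA0 : A ≠ 0 := by
            intro h
            exact hq0 (by rw [hq_poly, h, h2, mul_zero, add_zero])
          by_cases h3 : D = 0
          · -- Case 3a
            obtain ⟨w, hw⟩ := exists_eval_ne_of_ne_zero' hA0
            set t1 := -(eval w Cp) / (eval w A) with ht1
            have key3 : t1 * eval w A + eval w Cp = 0 := by
              rw [ht1, div_mul_cancel₀ _ hw]; ring
            set v : ℝ → (Fin n → ℝ) := fun s => fun j => y j + s * (w j - y j) with hv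
            have hv0 : v 0 = y := by funext j; simp [hv]
            have hv1 : v 1 = w := by funext j; simp [hv]
            set f1 : ℝ → (Fin n → ℝ) × ℝ :=
              fun s => (Function.update (v s) i a, (0:ℝ)) with hf1def
            set f2 : ℝ → (Fin n → ℝ) × ℝ :=
              fun τ => (Function.update w i a, τ) with hf2def
            set f3 : ℝ → (Fin n → ℝ) × ℝ :=
              fun s => (Function.update w i (a + s), t1) with hf3def
            have hf1c : Continuous f1 :=
              (continuous_upd i (continuous_seg y w) continuous_const).prodMk continuous_const
            have hf2c : Continuous f2 := continuous_const.prodMk continuous_id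
            have hf3c : Continuous f3 :=
              (continuous_upd i continuous_const (continuous_const.add continuous_id)).prodMk
                continuous_const
            set L1 := f1 '' Set.univ with hL1
            set L2 := f2 '' Set.univ with hL2
            set L3 := f3 '' Set.univ with hL3
            have hL1pre : IsPreconnected L1 := isPreconnected_univ.image f1 hf1c.continuousOn
            have hL2pre : IsPreconnected L2 := isPreconnected_univ.image f2 hf2c.continuousOn
            have hL3pre : IsPreconnected L3 := isPreconnected_univ.image f3 hf3c.continuousOn
            have hj1 : (y, (0:ℝ)) ∈ L1 := ⟨0, trivial, by rw [hf1def]; simp [hv0, hupd_ya]⟩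
            have hj2 : (Function.update w i a, (0:ℝ)) ∈ L1 := ⟨1, trivial, by simp only [hf1def, hv1]⟩
            have hj2' : (Function.update w i a, (0:ℝ)) ∈ L2 := ⟨0, trivial, rfl⟩
            have hj3 : (Function.update w i a, t1) ∈ L2 := ⟨t1, trivial, rfl⟩
            have hj3' : (Function.update w i a, t1) ∈ L3 := ⟨0, trivial, by simp [hf3def]⟩
            have hpre12 : IsPreconnected (T0 ∪ L1) :=
              IsPreconnected.union (y, 0) (hyT0 0) hj1 hT0pre hL1pre
            have hpre123 : IsPreconnected ((T0 ∪ L1) ∪ L2) :=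
              IsPreconnected.union _ (Or.inr hj2) hj2' hpre12 hL2pre
            refine ⟨((T0 ∪ L1) ∪ L2) ∪ L3,
              IsPreconnected.union _ (Or.inr hj3) hj3' hpre123 hL3pre,
              ?_, Or.inl (Or.inl (Or.inl (hyT0 0))), ?_⟩
            · rintro p (((hp | ⟨s, -, rfl⟩) | ⟨τ, -, rfl⟩) | ⟨s, -, rfl⟩)
              · exact hT0eq p hp
              · simp only [hf1def]
                rw [Hr (v s) a, h3, map_zero]
                simp
              · simp only [hf2def]
                rw [Hq w a, Hr w a, h2, h3, map_zero]
                simp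
              · simp only [hf3def]
                rw [Hq w (a + s), Hr w (a + s), h2, h3, map_zero]
                linear_combination (a + s - a) * key3
            · refine ⟨f3 1, Or.inr ⟨1, trivial, rfl⟩, ?_⟩
              simp only [hf3def]
              rw [Hq w (a + 1), h2, map_zero, add_zero]
              have : a + 1 - a = 1 := by ring
              rw [this, one_mul]
              exact hw
          · -- D ≠ 0
            by_cases h4 : eval y Cp = 0
            · by_cases h5 : Cp = 0
              · -- Case 3d : recurse on (A, D), lift with t = 1
                have hcard' := card_step hi hAi hDi (fun j hj => by
                  rcases hj with h | h
                  · refine Or.inl (fun h0 => h ?_)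
                    have := degreeOf_pderiv_le i q j
                    rw [h0] at this
                    exact Nat.le_zero.mp this
                  · refine Or.inr (fun h0 => h ?_)
                    have := degreeOf_subst_le i a r j
                    rw [h0] at this
                    exact Nat.le_zero.mp this) hcard
                obtain ⟨S0, hS0pre, hS0eq, hS0start, hS0end⟩ :=
                  IH A D hcard' hMA_A hMA_D hA0 y h1 hyD
                obtain ⟨S0', hS0'pre, hS0'eq, hS0'start, ⟨v1, τ1⟩, hv1mem, hv1A, hv1D⟩ :=
                  extend h3 hS0pre hS0eq hS0start hS0end
                set ψ : (Fin n → ℝ) × ℝ → (Fin n → ℝ) × ℝ :=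
                  fun p => (Function.update p.1 i (a + p.2), (1:ℝ)) with hψdef
                have hψc : Continuous ψ :=
                  (continuous_upd i continuous_fst (continuous_const.add continuous_snd)).prodMk
                    continuous_const
                have hSψpre : IsPreconnected (ψ '' S0') := hS0'pre.image ψ hψc.continuousOn
                have hy1 : (y, (1:ℝ)) ∈ ψ '' S0' :=
                  ⟨(y, 0), hS0'start, by rw [hψdef]; simp [hupd_ya]⟩
                refine ⟨T0 ∪ ψ '' S0',
                  IsPreconnected.union (y, 1) (hyT0 1) hy1 hT0pre hSψpre,
                  ?_, Or.inl (hyT0 0), ?_⟩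
                · rintro p (hp | ⟨⟨v, τ⟩, hvS, rfl⟩)
                  · exact hT0eq p hp
                  · have hvτ : τ * eval v A + eval v D = 0 := hS0'eq (v, τ) hvS
                    simp only [hψdef]
                    rw [Hq v (a + τ), Hr v (a + τ), h2, h5, map_zero]
                    linear_combination hvτ
                · have hE1 : τ1 * eval v1 A + eval v1 D = 0 := hS0'eq (v1, τ1) hv1mem
                  have hv1D' : eval v1 D ≠ 0 := hv1D
                  have hτ1 : τ1 ≠ 0 := by
                    intro h
                    rw [h, zero_mul, zero_add] at hE1
                    exact hv1D' hE1
                  refine ⟨ψ (v1, τ1), Or.inr ⟨(v1, τ1), hv1mem, rfl⟩, ?_⟩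
                  simp only [hψdef]
                  rw [Hq v1 (a + τ1), h2, map_zero, add_zero]
                  have : a + τ1 - a = τ1 := by ring
                  rw [this]
                  exact mul_ne_zero hτ1 hv1A
              · -- Case 3c : recurse on (Cp, D), lift with t = 0
                have hcard' := card_step hi hCi hDi (fun j hj => by
                  rcases hj with h | h
                  · refine Or.inr (fun h0 => h ?_)
                    have := degreeOf_pderiv_le i r j
                    rw [h0] at this
                    exact Nat.le_zero.mp this
                  · refine Or.inr (fun h0 => h ?_)
                    have := degreeOf_subst_le i a r j
                    rw [h0] at this
                    exact Nat.le_zero.mp this) hcard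
                obtain ⟨S0, hS0pre, hS0eq, hS0start, hS0end⟩ :=
                  IH Cp D hcard' hMA_C hMA_D h5 y h4 hyD
                have hAD : A * D ≠ 0 := mul_ne_zero hA0 h3
                obtain ⟨S0', hS0'pre, hS0'eq, hS0'start, ⟨v1, τ1⟩, hv1mem, hv1C, hv1AD⟩ :=
                  extend hAD hS0pre hS0eq hS0start hS0end
                set ψ : (Fin n → ℝ) × ℝ → (Fin n → ℝ) × ℝ :=
                  fun p => (Function.update p.1 i (a + p.2), (0:ℝ)) with hψdef
                have hψc : Continuous ψ :=
                  (continuous_upd i continuous_fst (continuous_const.add continuous_snd)).prodMk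
                    continuous_const
                have hSψpre : IsPreconnected (ψ '' S0') := hS0'pre.image ψ hψc.continuousOn
                have hy0 : (y, (0:ℝ)) ∈ ψ '' S0' :=
                  ⟨(y, 0), hS0'start, by rw [hψdef]; simp [hupd_ya]⟩
                refine ⟨ψ '' S0', hSψpre, ?_, hy0, ?_⟩
                · rintro p ⟨⟨v, τ⟩, hvS, rfl⟩
                  have hvτ : τ * eval v Cp + eval v D = 0 := hS0'eq (v, τ) hvS
                  simp only [hψdef]
                  rw [zero_mul, zero_add, Hr v (a + τ)]
                  linear_combination hvτ
                · have hE1 : τ1 * eval v1 Cp + eval v1 D = 0 := hS0'eq (v1, τ1) hv1mem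
                  have hv1AD' : eval v1 (A * D) ≠ 0 := hv1AD
                  rw [map_mul] at hv1AD'
                  obtain ⟨hv1A, hv1D⟩ := mul_ne_zero_iff.mp hv1AD' 
                  have hτ1 : τ1 ≠ 0 := by
                    intro h
                    rw [h, zero_mul, zero_add] at hE1
                    exact hv1D hE1
                  refine ⟨ψ (v1, τ1), ⟨(v1, τ1), hv1mem, rfl⟩, ?_⟩
                  simp only [hψdef]
                  rw [Hq v1 (a + τ1), h2, map_zero, add_zero]
                  have : a + τ1 - a = τ1 := by ring
                  rw [this]
                  exact mul_ne_zero hτ1 hv1A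
            · -- Case 3b : eval y Cp ≠ 0, graph over a segment
              have hop : IsOpen {v : Fin n → ℝ | eval v Cp ≠ 0} :=
                isOpen_compl_singleton.preimage (continuous_evalp Cp)
              obtain ⟨ρ, hρ, hball⟩ := Metric.isOpen_iff.mp hop y h4
              have hAD : A * D ≠ 0 := mul_ne_zero hA0 h3
              obtain ⟨w, hwball, hwAD⟩ := exists_eval_ne_of_ne_zero hAD y hρ
              rw [map_mul] at hwAD
              obtain ⟨hwA, hwD⟩ := mul_ne_zero_iff.mp hwAD
              set v : ℝ → (Fin n → ℝ) := fun s => fun j => y j + s * (w j - y j) with hv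
              have hv0 : v 0 = y := by funext j; simp [hv]
              have hv1 : v 1 = w := by funext j; simp [hv]
              have hvc : Continuous v := continuous_seg y w
              have hsegC : ∀ s ∈ Set.Icc (0:ℝ) 1, eval (v s) Cp ≠ 0 := fun s hs =>
                hball (seg_mem_ball hρ hwball hs)
              set g : ℝ → ℝ := fun s => a - eval (v s) D / eval (v s) Cp with hg
              have hgc : ContinuousOn g (Set.Icc (0:ℝ) 1) :=
                continuousOn_const.sub (ContinuousOn.div
                  (((continuous_evalp D).comp hvc).continuousOn)
                  (((continuous_evalp Cp).comp hvc).continuousOn) hsegC)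
              set f : ℝ → (Fin n → ℝ) × ℝ :=
                fun s => (Function.update (v s) i (g s), (0:ℝ)) with hfdef
              have hfc : ContinuousOn f (Set.Icc (0:ℝ) 1) := by
                apply ContinuousOn.prodMk _ continuousOn_const
                exact (continuous_update i).comp_continuousOn
                  ((hvc.continuousOn).prodMk hgc)
              set S2 := f '' Set.Icc (0:ℝ) 1 with hS2
              have hS2pre : IsPreconnected S2 := isPreconnected_Icc.image f hfc
              have hstart : (y, (0:ℝ)) ∈ S2 := by
                refine ⟨0, Set.mem_Icc.mpr ⟨le_refl 0, zero_le_one⟩, ?_⟩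
                rw [hfdef]
                simp only [hg, hv0, hyD, zero_div, sub_zero, hupd_ya]
              refine ⟨S2, hS2pre, ?_, hstart, ?_⟩
              · rintro p ⟨s, hs, rfl⟩
                have hCs := hsegC s hs
                simp only [hfdef]
                rw [zero_mul, zero_add, Hr (v s) (g s)]
                have hc : g s - a = -(eval (v s) D / eval (v s) Cp) := by rw [hg]; ring
                rw [hc, neg_mul, div_mul_cancel₀ _ hCs]
                ring
              · refine ⟨f 1, ⟨1, Set.mem_Icc.mpr ⟨zero_le_one, le_refl 1⟩, rfl⟩, ?_⟩
                simp only [hfdef]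
                have hg1 : g 1 = a - eval w D / eval w Cp := by simp only [hg, hv1]
                rw [Hq (v 1) (g 1), h2, map_zero, add_zero, hg1, hv1]
                have heq2 : a - eval w D / eval w Cp - a = -(eval w D / eval w Cp) := by ring
                rw [heq2]
                exact mul_ne_zero (neg_ne_zero.mpr (div_ne_zero hwD (hball hwball))) hwA
        · -- Case 2 : recurse on (B, D)
          have hcard' := card_step hi hBi hDi (fun j hj => by
            rcases hj with h | h
            · refine Or.inl (fun h0 => h ?_)
              have := degreeOf_subst_le i a q j
              rw [h0] at this
              exact Nat.le_zero.mp this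
            · refine Or.inr (fun h0 => h ?_)
              have := degreeOf_subst_le i a r j
              rw [h0] at this
              exact Nat.le_zero.mp this) hcard
          obtain ⟨S0, hS0pre, hS0eq, hS0start, ⟨v1, τ1⟩, hv1mem, hv1B⟩ :=
            IH B D hcard' hMA_B hMA_D h2 y hyB hyD
          set ψ : (Fin n → ℝ) × ℝ → (Fin n → ℝ) × ℝ :=
            fun p => (Function.update p.1 i a, p.2) with hψdef
          have hψc : Continuous ψ :=
            (continuous_upd i continuous_fst continuous_const).prodMk continuous_snd
          have hSψpre : IsPreconnected (ψ '' S0) := hS0pre.image ψ hψc.continuousOn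
          have hy0 : (y, (0:ℝ)) ∈ ψ '' S0 :=
            ⟨(y, 0), hS0start, by rw [hψdef]; simp [hupd_ya]⟩
          refine ⟨ψ '' S0, hSψpre, ?_, hy0, ?_⟩
          · rintro p ⟨⟨v, τ⟩, hvS, rfl⟩
            have hvτ : τ * eval v B + eval v D = 0 := hS0eq (v, τ) hvS
            simp only [hψdef]
            rw [Hq v a, Hr v a, sub_self, zero_mul, zero_mul, zero_add, zero_add]
            exact hvτ
          · refine ⟨ψ (v1, τ1), ⟨(v1, τ1), hv1mem, rfl⟩, ?_⟩
            simp only [hψdef]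
            rw [Hq v1 a, sub_self, zero_mul, zero_add]
            exact hv1B

end NoComp


/-- If `P = X_n · Q + R` is an irreducible multi-affine polynomial with `Q ≠ 0` (and `Q`, `R`
not involving `X_n`), then no connected component of `Z(P, ℝ^n)` is contained in `Z(Q, ℝ^n)`. -/
theorem no_component_in_ZQ (n : ℕ) (hn : 1 ≤ n)
    (P Q R : MvPolynomial (Fin n) ℝ)
    (hma : ∀ i : Fin n, P.degreeOf i ≤ 1)
    (hirr : Irreducible P)
    (i₀ : Fin n) (hi₀ : (i₀ : ℕ) = n - 1)
    (hQ : Q.degreeOf i₀ = 0) (hR : R.degreeOf i₀ = 0)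
    (hPQR : P = X i₀ * Q + R) (hQ0 : Q ≠ 0) :
    ∀ x ∈ {y : Fin n → ℝ | eval y P = 0},
      ¬ (connectedComponentIn {y : Fin n → ℝ | eval y P = 0} x
          ⊆ {y : Fin n → ℝ | eval y Q = 0}) := by
  intro x hx hsub
  classical
  set Z := {y : Fin n → ℝ | eval y P = 0} with hZ
  have hxZ : eval x P = 0 := hx
  have hxC : x ∈ connectedComponentIn Z x := mem_connectedComponentIn hx
  have hxQ : eval x Q = 0 := hsub hxC
  have hevalP : ∀ u : Fin n → ℝ, eval u P = u i₀ * eval u Q + eval u R := by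
    intro u
    rw [hPQR, map_add, map_mul, eval_X]
  have hxR : eval x R = 0 := by
    have h := hevalP x
    rw [hxZ, hxQ, mul_zero, zero_add] at h
    exact h.symm
  -- multi-affineness of Q and R
  have hMAR : ∀ j, degreeOf j R ≤ 1 := by
    intro j
    rw [MvPolynomial.degreeOf_le_iff]
    intro m hm
    have hmi : m i₀ = 0 := by
      have := monomial_le_degreeOf i₀ hm
      rw [hR] at this
      exact Nat.le_zero.mp this
    have hcoeff : coeff m P = coeff m R := by
      rw [hPQR, coeff_add, coeff_X_mul', if_neg (by
        rw [Finsupp.mem_support_iff]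
        simpa using hmi), zero_add]
    have hmem : m ∈ P.support := by
      rw [MvPolynomial.mem_support_iff, hcoeff]
      exact MvPolynomial.mem_support_iff.mp hm
    exact le_trans (monomial_le_degreeOf j hmem) (hma j)
  have hMAQ : ∀ j, degreeOf j Q ≤ 1 := by
    intro j
    rw [MvPolynomial.degreeOf_le_iff]
    intro m hm
    have hcoeff : coeff (m + Finsupp.single i₀ 1) P = coeff m Q := by
      rw [hPQR, coeff_add, coeff_X_mul']
      have hi : i₀ ∈ (m + Finsupp.single i₀ 1).support := by
        rw [Finsupp.mem_support_iff]
        simp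
      rw [if_pos hi, add_tsub_cancel_right]
      have hzero : coeff (m + Finsupp.single i₀ 1) R = 0 := by
        by_contra hc
        have h1 := monomial_le_degreeOf i₀ (MvPolynomial.mem_support_iff.mpr hc)
        rw [hR] at h1
        simp [Finsupp.add_apply] at h1
      rw [hzero, add_zero]
    have hmem : (m + Finsupp.single i₀ 1) ∈ P.support := by
      rw [MvPolynomial.mem_support_iff, hcoeff]
      exact MvPolynomial.mem_support_iff.mp hm
    have h1 : (m + Finsupp.single i₀ 1 : Fin n →₀ ℕ) j ≤ 1 :=
      le_trans (monomial_le_degreeOf j hmem) (hma j)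
    have h2 : m j ≤ (m + Finsupp.single i₀ 1 : Fin n →₀ ℕ) j := by simp
    exact le_trans h2 h1
  -- apply the key lemma
  have hcard : (Finset.filter (fun j => Q.degreeOf j ≠ 0 ∨ R.degreeOf j ≠ 0)
      Finset.univ).card ≤ n := by
    refine le_trans (Finset.card_filter_le _ _) ?_
    rw [Finset.card_univ, Fintype.card_fin]
  obtain ⟨S, hSpre, hSeq, hSstart, p1, hp1S, hp1⟩ :=
    NoComp.key n Q R hcard hMAQ hMAR hQ0 x hxQ hxR
  -- eval invariance in direction i₀
  have hQupd : ∀ (u : Fin n → ℝ) c, eval (Function.update u i₀ c) Q = eval u Q := fun u c =>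
    NoComp.eval_update_of_degreeOf_eq_zero hQ u c
  have hRupd : ∀ (u : Fin n → ℝ) c, eval (Function.update u i₀ c) R = eval u R := fun u c =>
    NoComp.eval_update_of_degreeOf_eq_zero hR u c
  set χ : (Fin n → ℝ) × ℝ → (Fin n → ℝ) := fun p => Function.update p.1 i₀ p.2 with hχdef
  have hχc : Continuous χ := NoComp.continuous_upd i₀ continuous_fst continuous_snd
  set Lx := (fun τ : ℝ => Function.update x i₀ τ) '' Set.univ with hLxdef
  have hLxpre : IsPreconnected Lx :=
    isPreconnected_univ.image _
      (NoComp.continuous_upd i₀ continuous_const continuous_id).continuousOn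
  have hχSpre : IsPreconnected (χ '' S) := hSpre.image χ hχc.continuousOn
  have hcommon : Function.update x i₀ 0 ∈ Lx := ⟨0, trivial, rfl⟩
  have hcommon' : Function.update x i₀ 0 ∈ χ '' S := ⟨(x, 0), hSstart, rfl⟩
  have hTpre : IsPreconnected (Lx ∪ χ '' S) :=
    IsPreconnected.union _ hcommon hcommon' hLxpre hχSpre
  have hTsub : Lx ∪ χ '' S ⊆ Z := by
    rintro u (⟨τ, -, rfl⟩ | ⟨⟨v, t⟩, hvS, rfl⟩)
    · show eval (Function.update x i₀ τ) P = 0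
      rw [hevalP, Function.update_self, hQupd, hRupd, hxQ, hxR, mul_zero, add_zero]
    · show eval (Function.update v i₀ t) P = 0
      have h : t * eval v Q + eval v R = 0 := hSeq (v, t) hvS
      rw [hevalP, Function.update_self, hQupd, hRupd]
      exact h
  have hxT : x ∈ Lx ∪ χ '' S := Or.inl ⟨x i₀, trivial, Function.update_eq_self i₀ x⟩
  have hTcomp : Lx ∪ χ '' S ⊆ connectedComponentIn Z x :=
    hTpre.subset_connectedComponentIn hxT hTsub
  have hmem : χ p1 ∈ {y : Fin n → ℝ | eval y Q = 0} :=
    hsub (hTcomp (Or.inr ⟨p1, hp1S, rfl⟩))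
  have hval : eval (χ p1) Q = eval p1.1 Q := hQupd p1.1 p1.2
  exact hp1 (by rw [← hval]; exact hmem)
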